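/- [Claim 3 in the proof of Lemma 2] Assume there are no redundant actions for the decision-maker and no redundant actions for the experts, and that ū is concave on Δ(Ω) (i.e., ū(t·π + (1−t)·π') ≥ t·ū(π) + (1−t)·ū(π') for all π, π' ∈ Δ(Ω) and t ∈ [0,1]). Let a ∈ Â and let π belong to the intrinsic (relative) interior of BR⁻¹(a) := {π ∈ Δ(Ω) : v(a,π) = v̄(π)}. Then δ_a is the unique minimizer of α ↦ u(α,π) over Δ(Â): u(α, π) > u(a, π) for every α ∈ Δ(Â) with α ≠ δ_a. -/

import Mathlib

open Finset

variable {Ω A : Type*}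

/-- Expected payoff of mixed action `α` at belief `π` (bilinear extension of `u`). -/
noncomputable def pay [Fintype Ω] [Fintype A] (u : A → Ω → ℝ) (α : A → ℝ) (π : Ω → ℝ) : ℝ :=
  ∑ a, ∑ ω, α a * π ω * u a ω

/-- Expected payoff of pure action `a` at belief `π`. -/
noncomputable def payP [Fintype Ω] (u : A → Ω → ℝ) (a : A) (π : Ω → ℝ) : ℝ :=
  ∑ ω, π ω * u a ω

/-- Pure best replies of the decision-maker at belief `π`. -/
def br [Fintype Ω] (v : A → Ω → ℝ) (π : Ω → ℝ) : Set A :=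
  {a | ∀ a', payP v a' π ≤ payP v a π}

/-- Mixed best replies of the decision-maker at belief `π`. -/
def BR [Fintype Ω] [Fintype A] (v : A → Ω → ℝ) (π : Ω → ℝ) : Set (A → ℝ) :=
  {α ∈ stdSimplex ℝ A | ∀ α' ∈ stdSimplex ℝ A, pay v α' π ≤ pay v α π}

/-- The expert value function `ū(π) = max_{α ∈ BR(π)} u(α, π)`. -/
noncomputable def ubar [Fintype Ω] [Fintype A] (u v : A → Ω → ℝ) (π : Ω → ℝ) : ℝ :=
  sSup ((fun α => pay u α π) '' BR v π)

/-- The decision-maker value function `v̄(π) = max_a v(a, π)`. -/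
noncomputable def vbar [Fintype Ω] [Fintype A] (v : A → Ω → ℝ) (π : Ω → ℝ) : ℝ :=
  ⨆ a, payP v a π

/-- Actions that are a best reply to some belief. -/
def Ahat [Fintype Ω] [Fintype A] (v : A → Ω → ℝ) : Set A :=
  {a | ∃ π ∈ stdSimplex ℝ Ω, a ∈ br v π}

/-- Mixed actions supported on `B`. -/
def simplexOn [Fintype A] (B : Set A) : Set (A → ℝ) :=
  {α | α ∈ stdSimplex ℝ A ∧ ∀ a ∉ B, α a = 0}

/-- `(lam, p)` is a splitting of the prior. -/
def IsSplitting [Fintype Ω] {S : Type*} [Fintype S] (lam : S → ℝ) (p : S → Ω → ℝ)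
    (prior : Ω → ℝ) : Prop :=
  (∀ s, 0 < lam s) ∧ (∑ s, lam s) = 1 ∧ (∀ s, p s ∈ stdSimplex ℝ Ω) ∧
    ∀ ω, (∑ s, lam s * p s ω) = prior ω

/-- `(lam, p)` is an optimal splitting of the prior: it attains `cav ū (prior)`. -/
def IsOptimalSplitting [Fintype Ω] [Fintype A] (u v : A → Ω → ℝ) {S : Type*} [Fintype S]
    (lam : S → ℝ) (p : S → Ω → ℝ) (prior : Ω → ℝ) : Prop :=
  IsSplitting lam p prior ∧
    ∀ (T : Type) [Fintype T] [Nonempty T] (mu : T → ℝ) (q : T → Ω → ℝ),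
      IsSplitting mu q prior →
        (∑ t, mu t * ubar u v (q t)) ≤ ∑ s, lam s * ubar u v (p s)

/-- Beliefs at which `a` is optimal for the decision-maker. -/
def BRinv [Fintype Ω] [Fintype A] (v : A → Ω → ℝ) (a : A) : Set (Ω → ℝ) :=
  {π ∈ stdSimplex ℝ Ω | payP v a π = vbar v π}

/-- No redundant actions for the decision-maker. -/
def NoRedundantDM [Fintype Ω] [Fintype A] (v : A → Ω → ℝ) : Prop :=
  ∀ B : Set A, B.Nonempty → B ⊂ Ahat v →
    ∃ π ∈ stdSimplex ℝ Ω, ∀ a ∈ B, payP v a π < vbar v π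

/-- No redundant actions for the experts. -/
def NoRedundantExperts [Fintype Ω] (u : A → Ω → ℝ) : Prop :=
  ∀ a a' : A, a ≠ a' → ∃ ω, u a ω ≠ u a' ω

/-- The expert value function `ū` is concave on the simplex. -/
def UbarConcave [Fintype Ω] [Fintype A] (u v : A → Ω → ℝ) : Prop :=
  ∀ π ∈ stdSimplex ℝ Ω, ∀ π' ∈ stdSimplex ℝ Ω, ∀ t ∈ Set.Icc (0 : ℝ) 1,
    t * ubar u v π + (1 - t) * ubar u v π' ≤ ubar u v (fun ω => t * π ω + (1 - t) * π' ω)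

set_option linter.unusedSectionVars false
set_option linter.unusedVariables false

section AuxLemmas
variable [Fintype Ω] [Fintype A]

lemma payP_combo (w : A → Ω → ℝ) (c : A) (s t : ℝ) (x y : Ω → ℝ) :
    payP w c (fun ω => s * x ω + t * y ω) = s * payP w c x + t * payP w c y := by
  unfold payP
  rw [Finset.mul_sum, Finset.mul_sum, ← Finset.sum_add_distrib]
  exact Finset.sum_congr rfl fun ω _ => by ring

lemma pay_eq_sum (w : A → Ω → ℝ) (α : A → ℝ) (π : Ω → ℝ) :
    pay w α π = ∑ c, α c * payP w c π := by
  unfold pay payP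
  exact Finset.sum_congr rfl fun c _ => by rw [Finset.mul_sum]; exact Finset.sum_congr rfl fun ω _ => by ring

lemma delta_mem [DecidableEq A] (b : A) :
    (fun c => if c = b then (1:ℝ) else 0) ∈ stdSimplex ℝ A := by
  constructor
  · intro c; dsimp; split <;> norm_num
  · simp

lemma pay_delta [DecidableEq A] (w : A → Ω → ℝ) (b : A) (π : Ω → ℝ) :
    pay w (fun c => if c = b then (1:ℝ) else 0) π = payP w b π := by
  rw [pay_eq_sum]
  rw [Finset.sum_eq_single b]
  · simp
  · intro c _ hc; simp [hc]
  · simp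

lemma combo_mem (x y : Ω → ℝ) (hx : x ∈ stdSimplex ℝ Ω) (hy : y ∈ stdSimplex ℝ Ω)
    {s t : ℝ} (hs : 0 ≤ s) (ht : 0 ≤ t) (hst : s + t = 1) :
    (fun ω => s * x ω + t * y ω) ∈ stdSimplex ℝ Ω := by
  have h := convex_stdSimplex ℝ Ω hx hy hs ht hst
  have h2 : (fun ω => s * x ω + t * y ω) = s • x + t • y := by
    funext ω; simp [smul_eq_mul]
  rw [h2]; exact h

variable [Nonempty A]

lemma le_vbar (v : A → Ω → ℝ) (c : A) (π : Ω → ℝ) : payP v c π ≤ vbar v π := by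
  unfold vbar
  exact le_ciSup (Set.Finite.bddAbove (Set.finite_range (fun c => payP v c π))) c

lemma vbar_le (v : A → Ω → ℝ) (π : Ω → ℝ) {m : ℝ} (h : ∀ c, payP v c π ≤ m) : vbar v π ≤ m := by
  unfold vbar; exact ciSup_le h

lemma vbar_eq_of_max (v : A → Ω → ℝ) {π : Ω → ℝ} {b : A} (h : ∀ c, payP v c π ≤ payP v b π) :
    vbar v π = payP v b π :=
  le_antisymm (vbar_le v π h) (le_vbar v b π)

lemma exists_br (v : A → Ω → ℝ) (π : Ω → ℝ) : ∃ b, ∀ c, payP v c π ≤ payP v b π := by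
  obtain ⟨b, hb⟩ := Finite.exists_max (fun c => payP v c π)
  exact ⟨b, hb⟩

end AuxLemmas

section AuxMain
variable [Fintype Ω] [Fintype A] [Nonempty A] [DecidableEq A]

lemma BR_singleton (u v : A → Ω → ℝ) {b : A} {π : Ω → ℝ}
    (h : ∀ c, c ≠ b → payP v c π < payP v b π) :
    BR v π = {(fun c => if c = b then (1:ℝ) else 0)} := by
  have hle : ∀ c, payP v c π ≤ payP v b π := by
    intro c
    by_cases hc : c = b
    · subst hc; exact le_refl _
    · exact (h c hc).le
  have hδBR : (fun c => if c = b then (1:ℝ) else 0) ∈ BR v π := by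
    refine ⟨delta_mem b, ?_⟩
    intro α' hα'
    rw [pay_delta, pay_eq_sum]
    calc ∑ c, α' c * payP v c π ≤ ∑ c, α' c * payP v b π :=
          Finset.sum_le_sum fun c _ => mul_le_mul_of_nonneg_left (hle c) (hα'.1 c)
      _ = payP v b π := by rw [← Finset.sum_mul, hα'.2, one_mul]
  ext α
  constructor
  · rintro ⟨hαs, hopt⟩
    have h1 : pay v α π ≤ payP v b π := by
      rw [pay_eq_sum]
      calc ∑ c, α c * payP v c π ≤ ∑ c, α c * payP v b π :=
            Finset.sum_le_sum fun c _ => mul_le_mul_of_nonneg_left (hle c) (hαs.1 c)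
        _ = payP v b π := by rw [← Finset.sum_mul, hαs.2, one_mul]
    have h2 : payP v b π ≤ pay v α π := by
      have := hopt _ (delta_mem b)
      rwa [pay_delta] at this
    have heq : pay v α π = payP v b π := le_antisymm h1 h2
    -- each α c * (payP v b π - payP v c π) = 0
    have hsum0 : ∑ c, α c * (payP v b π - payP v c π) = 0 := by
      have e1 : ∑ c, α c * (payP v b π - payP v c π)
          = (∑ c, α c * payP v b π) - ∑ c, α c * payP v c π := by
        rw [← Finset.sum_sub_distrib]
        exact Finset.sum_congr rfl fun c _ => by ring
      rw [e1, ← Finset.sum_mul, hαs.2, one_mul, ← pay_eq_sum, heq, sub_self]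
    have hzero : ∀ c ∈ Finset.univ, α c * (payP v b π - payP v c π) = 0 :=
      (Finset.sum_eq_zero_iff_of_nonneg
        (fun c _ => mul_nonneg (hαs.1 c) (sub_nonneg.2 (hle c)))).1 hsum0
    have hαc : ∀ c, c ≠ b → α c = 0 := by
      intro c hc
      have := hzero c (Finset.mem_univ c)
      rcases mul_eq_zero.1 this with h' | h'
      · exact h'
      · exact absurd (sub_eq_zero.1 h').symm (ne_of_lt (h c hc))
    have hαb : α b = 1 := by
      have := hαs.2
      rwa [Finset.sum_eq_single b (fun c _ hc => hαc c hc) (by simp)] at this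
    show α ∈ ({(fun c => if c = b then (1:ℝ) else 0)} : Set (A → ℝ))
    rw [Set.mem_singleton_iff]
    funext c
    by_cases hc : c = b
    · subst hc; simp [hαb]
    · simp [hc, hαc c hc]
  · rintro rfl
    exact hδBR

lemma ubar_of_strict (u v : A → Ω → ℝ) {b : A} {π : Ω → ℝ}
    (h : ∀ c, c ≠ b → payP v c π < payP v b π) :
    ubar u v π = payP u b π := by
  unfold ubar
  rw [BR_singleton u v h, Set.image_singleton, csSup_singleton, pay_delta]

/-- At some belief, `b` is the strictly unique best reply. -/
lemma exists_strict {v : A → Ω → ℝ} (hnrDM : NoRedundantDM v) {a' b : A}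
    (ha' : a' ∈ Ahat v) (hb : b ∈ Ahat v) (hne : a' ≠ b) :
    ∃ ρ ∈ stdSimplex ℝ Ω, ∀ c, c ≠ b → payP v c ρ < payP v b ρ := by
  obtain ⟨ρ, hρK, hρ⟩ := hnrDM (Ahat v \ {b}) ⟨a', ha', hne⟩
    ⟨Set.diff_subset, fun hsub => (hsub hb).2 rfl⟩
  refine ⟨ρ, hρK, ?_⟩
  -- b attains the max at ρ
  obtain ⟨m, hm⟩ := exists_br v ρ
  have hmA : m ∈ Ahat v := ⟨ρ, hρK, hm⟩
  have hmb : m = b := by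
    by_contra hmb
    have := hρ m ⟨hmA, hmb⟩
    rw [vbar_eq_of_max v hm] at this
    exact lt_irrefl _ this
  subst hmb
  intro c hc
  by_cases hcA : c ∈ Ahat v
  · have := hρ c ⟨hcA, hc⟩
    rwa [vbar_eq_of_max v hm] at this
  · have hcbr : c ∉ br v ρ := fun h' => hcA ⟨ρ, hρK, h'⟩
    simp only [br, Set.mem_setOf_eq] at hcbr
    push_neg at hcbr
    obtain ⟨c', hc'⟩ := hcbr
    exact lt_of_lt_of_le hc' (hm c')

/-- Perturbation: moving slightly from a strict-uniqueness point toward any `y` keeps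
strict uniqueness. -/
lemma perturb {v : A → Ω → ℝ} {b : A} {ρ : Ω → ℝ}
    (hρ : ∀ c, c ≠ b → payP v c ρ < payP v b ρ) (y : Ω → ℝ) :
    ∃ δ : ℝ, 0 < δ ∧ δ < 1 ∧
      ∀ c, c ≠ b → payP v c (fun ω => (1-δ) * ρ ω + δ * y ω)
        < payP v b (fun ω => (1-δ) * ρ ω + δ * y ω) := by
  have hev : ∀ᶠ δ : ℝ in nhds 0, ∀ c, c ≠ b →
      payP v c (fun ω => (1-δ) * ρ ω + δ * y ω)
        < payP v b (fun ω => (1-δ) * ρ ω + δ * y ω) := by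
    rw [Filter.eventually_all]
    intro c
    by_cases hc : c = b
    · filter_upwards with δ h; exact absurd hc h
    · have hcont : Continuous (fun δ : ℝ =>
          payP v b (fun ω => (1-δ) * ρ ω + δ * y ω)
          - payP v c (fun ω => (1-δ) * ρ ω + δ * y ω)) := by
        simp only [payP_combo]
        fun_prop
      have h0 : (0:ℝ) < payP v b (fun ω => (1-(0:ℝ)) * ρ ω + (0:ℝ) * y ω)
          - payP v c (fun ω => (1-(0:ℝ)) * ρ ω + (0:ℝ) * y ω) := by
        simp only [payP_combo]
        simp only [sub_zero, one_mul, zero_mul, add_zero]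
        linarith [hρ c hc]
      have := (hcont.tendsto 0).eventually_const_lt h0
      filter_upwards [this] with δ hδ _
      linarith [hδ]
  have hev2 : ∀ᶠ δ : ℝ in nhds 0, |δ| < 1/2 := by
    have : Set.Ioo (-(1/2):ℝ) (1/2) ∈ nhds (0:ℝ) := Ioo_mem_nhds (by norm_num) (by norm_num)
    filter_upwards [this] with δ hδ
    rw [abs_lt]; exact ⟨hδ.1, hδ.2⟩
  have h3 : ∀ᶠ δ : ℝ in nhdsWithin 0 (Set.Ioi 0),
      ((∀ c, c ≠ b → payP v c (fun ω => (1-δ) * ρ ω + δ * y ω)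
        < payP v b (fun ω => (1-δ) * ρ ω + δ * y ω)) ∧ |δ| < 1/2) :=
    (hev.and hev2).filter_mono nhdsWithin_le_nhds
  have h4 : ∀ᶠ δ : ℝ in nhdsWithin (0:ℝ) (Set.Ioi 0), 0 < δ := eventually_mem_nhdsWithin
  obtain ⟨δ, ⟨hδs, hδa⟩, hδp⟩ := (h3.and h4).exists
  exact ⟨δ, hδp, by cases abs_lt.1 hδa; linarith, hδs⟩

lemma ext_eq {v : A → Ω → ℝ} (w : A → Ω → ℝ) {b : A} {ρ : Ω → ℝ}
    (hρK : ρ ∈ stdSimplex ℝ Ω) (hρ : ∀ c, c ≠ b → payP v c ρ < payP v b ρ)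
    {d e : A}
    (hzero : ∀ π ∈ stdSimplex ℝ Ω, (∀ c, c ≠ b → payP v c π < payP v b π) →
      payP w d π = payP w e π) :
    ∀ y ∈ stdSimplex ℝ Ω, payP w d y = payP w e y := by
  intro y hy
  obtain ⟨δ, hδ0, hδ1, hδs⟩ := perturb hρ y
  have hzK : (fun ω => (1-δ) * ρ ω + δ * y ω) ∈ stdSimplex ℝ Ω :=
    combo_mem ρ y hρK hy (by linarith) (by linarith) (by ring)
  have hz := hzero _ hzK hδs
  have hbase := hzero ρ hρK hρ
  rw [payP_combo, payP_combo] at hz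
  rw [hbase] at hz
  exact mul_left_cancel₀ (ne_of_gt hδ0) (add_left_cancel hz)

lemma relint_push {v : A → Ω → ℝ} {a : A} {π₀ : Ω → ℝ}
    (hπ : π₀ ∈ intrinsicInterior ℝ (BRinv v a))
    {x : Ω → ℝ} (hx : x ∈ BRinv v a) :
    ∃ δ : ℝ, 0 < δ ∧ (fun ω => π₀ ω + δ * (π₀ ω - x ω)) ∈ BRinv v a := by
  have hπ₀C : π₀ ∈ BRinv v a := intrinsicInterior_subset hπ
  rw [mem_intrinsicInterior] at hπ
  obtain ⟨p, hp, hpe⟩ := hπ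
  have hmem := mem_interior_iff_mem_nhds.1 hp
  rw [Metric.mem_nhds_iff] at hmem
  obtain ⟨ε, hε, hball⟩ := hmem
  set δ : ℝ := ε / (2 * (‖π₀ - x‖ + 1)) with hδdef
  have hnorm : (0:ℝ) < ‖π₀ - x‖ + 1 := by positivity
  have hδ0 : 0 < δ := by positivity
  have hmemspan : δ • (π₀ -ᵥ x) +ᵥ π₀ ∈ affineSpan ℝ (BRinv v a) :=
    AffineSubspace.smul_vsub_vadd_mem _ δ
      (subset_affineSpan ℝ _ hπ₀C) (subset_affineSpan ℝ _ hx)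
      (subset_affineSpan ℝ _ hπ₀C)
  set q : ↥(affineSpan ℝ (BRinv v a)) := ⟨δ • (π₀ -ᵥ x) +ᵥ π₀, hmemspan⟩ with hqdef
  have hqball : q ∈ Metric.ball p ε := by
    rw [Metric.mem_ball, Subtype.dist_eq]
    show dist (δ • (π₀ -ᵥ x) +ᵥ π₀) ↑p < ε
    rw [hpe, dist_eq_norm]
    have heq2 : (δ • (π₀ -ᵥ x) +ᵥ π₀) - π₀ = δ • (π₀ - x) := by
      rw [vsub_eq_sub, vadd_eq_add, add_sub_cancel_right]
    rw [heq2, norm_smul, Real.norm_eq_abs, abs_of_pos hδ0]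
    calc δ * ‖π₀ - x‖ ≤ δ * (‖π₀ - x‖ + 1) := by nlinarith [norm_nonneg (π₀ - x)]
      _ = ε / 2 := by
          rw [hδdef]
          field_simp
      _ < ε := by linarith
  have hqC : (↑q : Ω → ℝ) ∈ BRinv v a := hball hqball
  refine ⟨δ, hδ0, ?_⟩
  have heq : (fun ω => π₀ ω + δ * (π₀ ω - x ω)) = δ • (π₀ -ᵥ x) +ᵥ π₀ := by
    funext ω
    rw [vsub_eq_sub, vadd_eq_add]
    simp [smul_eq_mul]
    ring
  rw [heq]
  exact hqC

lemma strict_at_relint {v : A → Ω → ℝ} (hnrDM : NoRedundantDM v) {a b' : A}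
    (ha : a ∈ Ahat v) (hb' : b' ∈ Ahat v) (hne : b' ≠ a) {π₀ : Ω → ℝ}
    (hπ : π₀ ∈ intrinsicInterior ℝ (BRinv v a)) :
    ∀ c, c ≠ a → payP v c π₀ < payP v a π₀ := by
  have hπ₀C : π₀ ∈ BRinv v a := intrinsicInterior_subset hπ
  obtain ⟨hπ₀K, hπ₀v⟩ := hπ₀C
  obtain ⟨σ, hσK, hσ⟩ := exists_strict hnrDM hb' ha hne
  have hσC : σ ∈ BRinv v a := by
    refine ⟨hσK, (vbar_eq_of_max v ?_).symm⟩
    intro c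
    by_cases hc : c = a
    · subst hc; exact le_refl _
    · exact (hσ c hc).le
  intro c hc
  by_contra hcon
  push_neg at hcon
  have hle : payP v c π₀ ≤ payP v a π₀ := by
    rw [hπ₀v]; exact le_vbar v c π₀
  have heq0 : payP v c π₀ = payP v a π₀ := le_antisymm hle hcon
  -- the linear functional payP v a - payP v c vanishes on all of BRinv v a
  have hC0 : ∀ x ∈ BRinv v a, payP v c x = payP v a x := by
    intro x hx
    obtain ⟨δ, hδ0, hy⟩ := relint_push hπ hx
    set y : Ω → ℝ := fun ω => π₀ ω + δ * (π₀ ω - x ω) with hydef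
    have hφx : payP v c x ≤ payP v a x := by
      rw [hx.2]; exact le_vbar v c x
    have hφy : payP v c y ≤ payP v a y := by
      rw [hy.2]; exact le_vbar v c y
    -- π₀ is a strict convex combination of x and y
    have hcombo : ∀ e : A, payP v e π₀
        = (δ/(1+δ)) * payP v e x + (1/(1+δ)) * payP v e y := by
      intro e
      have hfun : π₀ = (fun ω => (δ/(1+δ)) * x ω + (1/(1+δ)) * y ω) := by
        funext ω
        rw [hydef]
        have h1δ : (1:ℝ) + δ ≠ 0 := by linarith
        field_simp
        ring
      conv_lhs => rw [hfun]
      exact payP_combo v e _ _ x y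
    have h1 := hcombo a
    have h2 := hcombo c
    have hs : 0 < δ/(1+δ) := by positivity
    have ht : 0 < 1/(1+δ) := by positivity
    nlinarith [hφx, hφy, h1, h2, heq0]
  have := hC0 σ hσC
  have h2 := hσ c hc
  linarith

lemma conc3 {u v : A → Ω → ℝ} (hconc : UbarConcave u v) {x y : Ω → ℝ}
    (hx : x ∈ stdSimplex ℝ Ω) (hy : y ∈ stdSimplex ℝ Ω) {t : ℝ} (ht0 : 0 ≤ t) (ht1 : t ≤ 1) :
    (1-t) * ubar u v x + t * ubar u v y ≤ ubar u v (fun ω => (1-t) * x ω + t * y ω) := by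
  have h := hconc y hy x hx t ⟨ht0, ht1⟩
  have heq : (fun ω => t * y ω + (1 - t) * x ω) = (fun ω => (1-t) * x ω + t * y ω) := by
    funext ω; ring
  rw [heq] at h
  linarith

lemma strict_combo {v : A → Ω → ℝ} {b : A} {x y : Ω → ℝ}
    (hx : ∀ c, c ≠ b → payP v c x < payP v b x)
    (hy : ∀ c, c ≠ b → payP v c y < payP v b y)
    {s t : ℝ} (hs : 0 ≤ s) (ht : 0 ≤ t) (hst : s + t = 1) :
    ∀ c, c ≠ b → payP v c (fun ω => s * x ω + t * y ω) < payP v b (fun ω => s * x ω + t * y ω) := by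
  intro c hc
  rw [payP_combo, payP_combo]
  rcases eq_or_lt_of_le hs with h | h
  · have ht1 : t = 1 := by linarith
    rw [← h, ht1]
    simpa using hy c hc
  · have h1 : s * payP v c x < s * payP v b x := by
      exact mul_lt_mul_of_pos_left (hx c hc) h
    have h2 : t * payP v c y ≤ t * payP v b y :=
      mul_le_mul_of_nonneg_left (hy c hc).le ht
    linarith

lemma key_compare {u v : A → Ω → ℝ} (hnrDM : NoRedundantDM v) (hnrE : NoRedundantExperts u)
    (hconc : UbarConcave u v) {a b : A} (ha : a ∈ Ahat v) (hb : b ∈ Ahat v) (hba : b ≠ a)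
    {π₀ : Ω → ℝ} (hπ : π₀ ∈ intrinsicInterior ℝ (BRinv v a)) :
    payP u a π₀ < payP u b π₀ := by
  classical
  have hstricta : ∀ c, c ≠ a → payP v c π₀ < payP v a π₀ :=
    strict_at_relint hnrDM ha hb hba hπ
  have hπ₀K : π₀ ∈ stdSimplex ℝ Ω := (intrinsicInterior_subset hπ).1
  -- main per-ρ' argument
  have hmain : ∀ ρ' ∈ stdSimplex ℝ Ω, (∀ c, c ≠ b → payP v c ρ' < payP v b ρ') →
      payP u a π₀ ≤ payP u b π₀ ∧
        (payP u a π₀ = payP u b π₀ → payP u a ρ' = payP u b ρ') := by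
    intro ρ' hρ'K hρ'
    -- choose ε (strict-a point toward ρ') and s (strict-b point toward π₀)
    obtain ⟨ε, hε0, hε1, hεs⟩ := perturb hstricta ρ'
    obtain ⟨δ', hδ'0, hδ'1, hδ's⟩ := perturb hρ' π₀
    set s : ℝ := 1 - δ' with hsdef
    have hs0 : 0 < s := by rw [hsdef]; linarith
    have hs1 : s < 1 := by rw [hsdef]; linarith
    -- notation for points on the segment
    set P : ℝ → Ω → ℝ := fun t => fun ω => (1-t) * π₀ ω + t * ρ' ω with hPdef
    have hPK : ∀ t, 0 ≤ t → t ≤ 1 → P t ∈ stdSimplex ℝ Ω := by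
      intro t h1 h2
      exact combo_mem π₀ ρ' hπ₀K hρ'K (by linarith) h1 (by ring)
    have hPa : ∀ e : A, ∀ t : ℝ, payP u e (P t) = (1-t) * payP u e π₀ + t * payP u e ρ' := by
      intro e t; exact payP_combo u e _ _ _ _
    have hPva : ∀ e : A, ∀ t : ℝ, payP v e (P t) = (1-t) * payP v e π₀ + t * payP v e ρ' := by
      intro e t; exact payP_combo v e _ _ _ _
    -- strict-a at P ε
    have hPε : ∀ c, c ≠ a → payP v c (P ε) < payP v a (P ε) := by
      have : P ε = fun ω => (1-ε) * π₀ ω + ε * ρ' ω := rfl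
      rw [this]; exact hεs
    -- strict-b at P s
    have hPs : ∀ c, c ≠ b → payP v c (P s) < payP v b (P s) := by
      have heq : P s = fun ω => (1-δ') * ρ' ω + δ' * π₀ ω := by
        funext ω; rw [hPdef, hsdef]; ring_nf
      rw [heq]; exact hδ's
    -- ε < s
    have hεlts : ε < s := by
      by_contra hcon
      push_neg at hcon   -- s ≤ ε
      -- then P ε is a convex combination of P s and ρ' = P 1, so strict-b at P ε
      have hcombo : P ε = fun ω => ((1-ε)/(1-s)) * (P s) ω + ((ε-s)/(1-s)) * ρ' ω := by
        funext ω
        rw [hPdef]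
        have h1s : (1:ℝ) - s ≠ 0 := by intro h; linarith
        field_simp
        ring
      have hstrictb : ∀ c, c ≠ b → payP v c (P ε) < payP v b (P ε) := by
        rw [hcombo]
        refine strict_combo hPs hρ' ?_ ?_ ?_
        · apply div_nonneg <;> linarith
        · apply div_nonneg <;> linarith
        · have h1s : (1:ℝ) - s ≠ 0 := by intro h; linarith [hs1, (by linarith : s = 1)]
          field_simp
          ring
      have h1 := hPε b hba
      have h2 := hstrictb a (fun h => hba h.symm)
      linarith
    -- ubar values
    have hf0 : ubar u v π₀ = payP u a π₀ := ubar_of_strict u v hstricta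
    have hfρ' : ubar u v ρ' = payP u b ρ' := ubar_of_strict u v hρ'
    have hfε : ubar u v (P ε) = payP u a (P ε) := ubar_of_strict u v hPε
    have hfs : ubar u v (P s) = payP u b (P s) := ubar_of_strict u v hPs
    -- weak inequality via concavity at P s between π₀ and ρ'
    have hW : payP u a π₀ ≤ payP u b π₀ := by
      have hcc := conc3 hconc hπ₀K hρ'K hs0.le hs1.le
      have : (fun ω => (1-s) * π₀ ω + s * ρ' ω) = P s := rfl
      rw [this, hfs, hf0, hfρ', hPa b s] at hcc
      nlinarith
    refine ⟨hW, ?_⟩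
    intro heqq
    -- P s as combination of P ε and ρ' : weight λ = (1-s)/(1-ε) on P ε
    have hlam0 : (0:ℝ) < (1-s)/(1-ε) := by apply div_pos <;> linarith
    have hlam1 : (1-s)/(1-ε) < 1 := by
      rw [div_lt_one (by linarith)]; linarith
    have hcombo1 : P s = fun ω => (1 - (1-(1-s)/(1-ε))) * (P ε) ω + (1-(1-s)/(1-ε)) * ρ' ω := by
      funext ω
      rw [hPdef]
      have h1ε : (1:ℝ) - ε ≠ 0 := by intro h; linarith
      field_simp
      ring
    have hub1 : payP u a (P ε) ≤ payP u b (P ε) := by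
      have hcc := conc3 hconc (hPK ε hε0.le hε1.le) hρ'K
        (t := 1-(1-s)/(1-ε)) (by linarith) (by linarith)
      rw [← hcombo1, hfs, hfε, hfρ'] at hcc
      have hexp : payP u b (P s)
          = (1 - (1-(1-s)/(1-ε))) * payP u b (P ε) + (1-(1-s)/(1-ε)) * payP u b ρ' := by
        conv_lhs => rw [hcombo1]
        exact payP_combo u b _ _ _ _
      nlinarith [hlam0, hlam1, hcc, hexp]
    have hub2 : payP u b (P ε) ≤ payP u a (P ε) := by
      -- P ε as combination of π₀ and P s with weight μ = ε/s on P s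
      have hμ0 : (0:ℝ) < ε/s := by positivity
      have hμ1 : ε/s < 1 := by rw [div_lt_one hs0]; exact hεlts
      have hcombo2 : P ε = fun ω => (1 - ε/s) * π₀ ω + (ε/s) * (P s) ω := by
        funext ω
        rw [hPdef]
        have hsne : s ≠ 0 := ne_of_gt hs0
        field_simp
        ring
      have hcc := conc3 hconc hπ₀K (hPK s hs0.le hs1.le) (t := ε/s) hμ0.le hμ1.le
      rw [← hcombo2, hfε, hf0, hfs] at hcc
      have hexp : payP u b (P ε)
          = (1 - ε/s) * payP u b π₀ + (ε/s) * payP u b (P s) := by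
        conv_lhs => rw [hcombo2]
        exact payP_combo u b _ _ _ _
      rw [heqq] at hcc
      linarith [hcc, hexp]
    have heqε : payP u a (P ε) = payP u b (P ε) := le_antisymm hub1 hub2
    rw [hPa a ε, hPa b ε, heqq] at heqε
    have : ε * payP u a ρ' = ε * payP u b ρ' := by linarith
    exact mul_left_cancel₀ (ne_of_gt hε0) this
  -- conclude
  obtain ⟨ρ, hρK, hρ⟩ := exists_strict hnrDM ha hb (fun h => hba h.symm)
  rcases lt_or_eq_of_le (hmain ρ hρK hρ).1 with h | h
  · exact h
  · exfalso
    have hzero : ∀ π ∈ stdSimplex ℝ Ω, (∀ c, c ≠ b → payP v c π < payP v b π) →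
        payP u a π = payP u b π := fun π hπK hπs => (hmain π hπK hπs).2 h
    have hall := ext_eq u hρK hρ hzero
    obtain ⟨ω, hω⟩ := hnrE a b (fun h' => hba h'.symm)
    have hδK : (fun ω' => if ω' = ω then (1:ℝ) else 0) ∈ stdSimplex ℝ Ω := by
      constructor
      · intro ω'; dsimp; split <;> norm_num
      · simp
    have := hall _ hδK
    unfold payP at this
    rw [Finset.sum_eq_single ω (fun ω' _ hω' => by simp [hω']) (by simp),
        Finset.sum_eq_single ω (fun ω' _ hω' => by simp [hω']) (by simp)] at this
    simp at this
    exact hω this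

end AuxMain

/-- Claim 3 in the proof of Lemma 2: `δ_a` is the unique minimizer of `u(·, π)` over `Δ(Â)`. -/
theorem unique_minimizer_relint {Ω A : Type*} [Fintype Ω] [Nonempty Ω] [Fintype A] [Nonempty A]
    [DecidableEq A] (u v : A → Ω → ℝ)
    (hnrDM : NoRedundantDM v) (hnrE : NoRedundantExperts u) (hconc : UbarConcave u v)
    (a : A) (ha : a ∈ Ahat v)
    (π : Ω → ℝ) (hπ : π ∈ intrinsicInterior ℝ (BRinv v a)) :
    ∀ α ∈ simplexOn (Ahat v), α ≠ (fun a' => if a' = a then (1 : ℝ) else 0) →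
      payP u a π < pay u α π := by

  classical
  intro α hα hne
  obtain ⟨hαK, hαsupp⟩ := hα
  have hc : ∃ c, c ≠ a ∧ 0 < α c := by
    by_contra h
    push_neg at h
    have hz : ∀ c, c ≠ a → α c = 0 := fun c hc => le_antisymm (h c hc) (hαK.1 c)
    apply hne
    funext c
    by_cases hca : c = a
    · subst hca
      have h1 : α c = 1 := by
        have h2 := hαK.2
        rwa [Finset.sum_eq_single c (fun c' _ hc' => hz c' hc') (by simp)] at h2
      simp [h1]
    · simp [hca, hz c hca]
  obtain ⟨c₀, hc₀a, hc₀pos⟩ := hc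
  have hc₀A : c₀ ∈ Ahat v := by
    by_contra h
    exact absurd (hαsupp c₀ h) (ne_of_gt hc₀pos)
  have hkey : ∀ c, c ∈ Ahat v → c ≠ a → payP u a π < payP u c π :=
    fun c hcA hca => key_compare hnrDM hnrE hconc ha hcA hca hπ
  have hterm : ∀ c ∈ Finset.univ, α c * payP u a π ≤ α c * payP u c π := by
    intro c _
    by_cases h0 : α c = 0
    · simp [h0]
    · have hcA : c ∈ Ahat v := by
        by_contra h
        exact h0 (hαsupp c h)
      by_cases hca : c = a
      · subst hca; exact le_refl _
      · exact mul_le_mul_of_nonneg_left (hkey c hcA hca).le (hαK.1 c)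
  calc payP u a π = ∑ c, α c * payP u a π := by rw [← Finset.sum_mul, hαK.2, one_mul]
    _ < ∑ c, α c * payP u c π :=
        Finset.sum_lt_sum hterm ⟨c₀, Finset.mem_univ c₀,
          mul_lt_mul_of_pos_left (hkey c₀ hc₀A hc₀a) hc₀pos⟩
    _ = pay u α π := (pay_eq_sum u α π).symm
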